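/- arXiv:2205.09094 — 3 statements merged into one kernel-verified Lean document; each statement's English description precedes it below -/
import Mathlib

section
/- Let V₁, V₂ be real-valued random variables on a common probability space with CDFs F₁ and F₂. Then for every δ ∈ ℝ, P(V₁ - V₂ ≤ δ) ≥ max(sup_u {F₁(u + δ/2) - F₂(u - δ/2)}, 0). -/
open MeasureTheory

/-- Makarov lower bound: for real random variables `V₁, V₂` with CDFs `F₁, F₂`, for every `δ`,
`P(V₁ - V₂ ≤ δ) ≥ max(sup_u {F₁(u+δ/2) - F₂(u-δ/2)}, 0)`. -/
theorem makarov_lower_bound {Ω : Type*} [MeasurableSpace Ω] (μ : Measure Ω)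
    [IsProbabilityMeasure μ] (V1 V2 : Ω → ℝ) (hV1 : Measurable V1) (hV2 : Measurable V2)
    (δ : ℝ) :
    max (⨆ u, ((μ {ω | V1 ω ≤ u + δ/2}).toReal - (μ {ω | V2 ω ≤ u - δ/2}).toReal)) 0
      ≤ (μ {ω | V1 ω - V2 ω ≤ δ}).toReal := by
  apply max_le _ ENNReal.toReal_nonneg
  apply ciSup_le
  intro u
  have hsub : {ω | V1 ω ≤ u + δ/2} ⊆ {ω | V2 ω ≤ u - δ/2} ∪ {ω | V1 ω - V2 ω ≤ δ} := by
    intro ω hω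
    by_cases h : V2 ω ≤ u - δ/2
    · exact Or.inl h
    · exact Or.inr (by simp only [Set.mem_setOf_eq] at *; linarith)
  have h1 : μ {ω | V1 ω ≤ u + δ/2} ≤ μ {ω | V2 ω ≤ u - δ/2} + μ {ω | V1 ω - V2 ω ≤ δ} :=
    le_trans (measure_mono hsub) (measure_union_le _ _)
  have h2 : (μ {ω | V1 ω ≤ u + δ/2}).toReal
      ≤ (μ {ω | V2 ω ≤ u - δ/2}).toReal + (μ {ω | V1 ω - V2 ω ≤ δ}).toReal := by
    rw [← ENNReal.toReal_add (measure_ne_top μ _) (measure_ne_top μ _)]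
    exact ENNReal.toReal_mono (ENNReal.add_ne_top.2 ⟨measure_ne_top μ _, measure_ne_top μ _⟩) h1
  linarith
end

section
/- Let V₁, V₂ be real-valued random variables on a common probability space with CDFs F₁ and F₂. Then for every δ ∈ ℝ, P(V₁ - V₂ ≤ δ) ≤ 1 + min(inf_u {F₁(u + δ/2) - F₂(u - δ/2)}, 0). -/
open MeasureTheory

/-- Makarov upper bound: for real random variables `V₁, V₂` with CDFs `F₁, F₂`, for every `δ`,
`P(V₁ - V₂ ≤ δ) ≤ 1 + min(inf_u {F₁(u+δ/2) - F₂(u-δ/2)}, 0)`. -/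
theorem makarov_upper_bound {Ω : Type*} [MeasurableSpace Ω] (μ : Measure Ω)
    [IsProbabilityMeasure μ] (V1 V2 : Ω → ℝ) (hV1 : Measurable V1) (hV2 : Measurable V2)
    (δ : ℝ) :
    (μ {ω | V1 ω - V2 ω ≤ δ}).toReal
      ≤ 1 + min (⨅ u, ((μ {ω | V1 ω ≤ u + δ/2}).toReal - (μ {ω | V2 ω ≤ u - δ/2}).toReal)) 0 := by
  rw [← sub_le_iff_le_add']
  refine le_min (le_ciInf fun u => ?_) ?_
  · have hC : MeasurableSet {ω | V2 ω ≤ u - δ/2} := hV2 measurableSet_Iic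
    have hsub : {ω | V1 ω - V2 ω ≤ δ} ⊆
        {ω | V1 ω ≤ u + δ/2} ∪ {ω | V2 ω ≤ u - δ/2}ᶜ := by
      intro ω hω
      by_cases h : V1 ω ≤ u + δ/2
      · exact Or.inl h
      · right
        simp only [Set.mem_compl_iff, Set.mem_setOf_eq, not_le] at *
        linarith [hω]
    have h1 : μ {ω | V1 ω - V2 ω ≤ δ} ≤
        μ {ω | V1 ω ≤ u + δ/2} + μ {ω | V2 ω ≤ u - δ/2}ᶜ :=
      (measure_mono hsub).trans (measure_union_le _ _)
    have h2 : (μ {ω | V2 ω ≤ u - δ/2}ᶜ).toReal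
        = 1 - (μ {ω | V2 ω ≤ u - δ/2}).toReal := by
      rw [prob_compl_eq_one_sub hC,
        ENNReal.toReal_sub_of_le prob_le_one (by norm_num), ENNReal.toReal_one]
    have h3 : (μ {ω | V1 ω - V2 ω ≤ δ}).toReal ≤
        (μ {ω | V1 ω ≤ u + δ/2}).toReal + (μ {ω | V2 ω ≤ u - δ/2}ᶜ).toReal := by
      rw [← ENNReal.toReal_add (measure_ne_top _ _) (measure_ne_top _ _)]
      exact ENNReal.toReal_mono (by finiteness) h1
    rw [h2] at h3
    linarith
  · have := prob_le_one (μ := μ) (s := {ω | V1 ω - V2 ω ≤ δ})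
    have : (μ {ω | V1 ω - V2 ω ≤ δ}).toReal ≤ 1 := by
      simpa using ENNReal.toReal_mono ENNReal.one_ne_top this
    linarith
end

section
/- Let V₁, V₂ be real-valued random variables and F₁, F₂ their CDFs. Then θ^L(δ) := -min(inf_u {F₁(u+δ/2) - F₂(u-δ/2)}, 0) and θ^U(δ) := 1 - max(sup_u {F₁(u+δ/2) - F₂(u-δ/2)}, 0) satisfy θ^L(δ) ≤ P(V₁ - V₂ > δ) ≤ θ^U(δ) for every δ ∈ ℝ. -/
open MeasureTheory

lemma makarov_aux {Ω : Type*} [MeasurableSpace Ω] (μ : Measure Ω)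
    [IsFiniteMeasure μ] {s t u : Set Ω} (h : s ⊆ t ∪ u) :
    (μ s).toReal ≤ (μ t).toReal + (μ u).toReal := by
  rw [← ENNReal.toReal_add (measure_ne_top _ _) (measure_ne_top _ _)]
  exact ENNReal.toReal_mono (by finiteness)
    ((measure_mono h).trans (measure_union_le _ _))

/-- Makarov bounds on the survival function of a difference. -/
noncomputable def thetaL (F1 F0 : ℝ → ℝ) (δ : ℝ) : ℝ :=
  -(min (⨅ y, (F1 (y + δ/2) - F0 (y - δ/2))) 0)

noncomputable def thetaU (F1 F0 : ℝ → ℝ) (δ : ℝ) : ℝ :=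
  1 - max (⨆ y, (F1 (y + δ/2) - F0 (y - δ/2))) 0

/-- For real random variables `V₁, V₂` with CDFs `F₁, F₂`, for every `δ`,
`θ^L(δ) ≤ P(V₁ - V₂ > δ) ≤ θ^U(δ)` where `θ^L, θ^U` are the Makarov bounds
for the survival function of `V₁ - V₂`. -/
theorem makarov_bounds_survival {Ω : Type*} [MeasurableSpace Ω] (μ : Measure Ω)
    [IsProbabilityMeasure μ] (V1 V2 : Ω → ℝ) (hV1 : Measurable V1) (hV2 : Measurable V2)
    (δ : ℝ) :
    thetaL (fun v => (μ {ω | V1 ω ≤ v}).toReal) (fun v => (μ {ω | V2 ω ≤ v}).toReal) δ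
        ≤ (μ {ω | δ < V1 ω - V2 ω}).toReal ∧
      (μ {ω | δ < V1 ω - V2 ω}).toReal
        ≤ thetaU (fun v => (μ {ω | V1 ω ≤ v}).toReal) (fun v => (μ {ω | V2 ω ≤ v}).toReal) δ := by
  set D : Set Ω := {ω | δ < V1 ω - V2 ω} with hD
  have hDm : MeasurableSet D := measurableSet_lt measurable_const (hV1.sub hV2)
  have hDc : (μ Dᶜ).toReal = 1 - (μ D).toReal := by
    rw [prob_compl_eq_one_sub hDm, ENNReal.toReal_sub_of_le prob_le_one ENNReal.one_ne_top,
      ENNReal.toReal_one]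
  have hp0 : 0 ≤ (μ D).toReal := ENNReal.toReal_nonneg
  have hp1 : (μ D).toReal ≤ 1 := by
    simpa using ENNReal.toReal_mono ENNReal.one_ne_top (prob_le_one (μ := μ) (s := D))
  -- pointwise bounds
  have hlow : ∀ y : ℝ, -(μ D).toReal
      ≤ (μ {ω | V1 ω ≤ y + δ/2}).toReal - (μ {ω | V2 ω ≤ y - δ/2}).toReal := by
    intro y
    have hsub : {ω | V2 ω ≤ y - δ/2} ⊆ {ω | V1 ω ≤ y + δ/2} ∪ D := by
      intro ω hω; simp only [Set.mem_setOf_eq] at hω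
      by_cases h : V1 ω ≤ y + δ/2
      · exact Or.inl h
      · right; simp only [hD, Set.mem_setOf_eq]; push_neg at h; linarith [hω]
    have := makarov_aux μ hsub
    linarith
  have hup : ∀ y : ℝ, (μ {ω | V1 ω ≤ y + δ/2}).toReal - (μ {ω | V2 ω ≤ y - δ/2}).toReal
      ≤ 1 - (μ D).toReal := by
    intro y
    have hsub : {ω | V1 ω ≤ y + δ/2} ⊆ {ω | V2 ω ≤ y - δ/2} ∪ Dᶜ := by
      intro ω hω; simp only [Set.mem_setOf_eq] at hω
      by_cases h : V2 ω ≤ y - δ/2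
      · exact Or.inl h
      · right; simp only [hD, Set.mem_compl_iff, Set.mem_setOf_eq]; push_neg at h; intro hc; linarith [hω]
    have := makarov_aux μ hsub
    rw [hDc] at this
    linarith
  constructor
  · rw [thetaL, neg_le]
    refine le_min (le_ciInf fun y => hlow y) (by linarith)
  · rw [thetaU, le_sub_iff_add_le, ← le_sub_iff_add_le']
    exact max_le (ciSup_le fun y => hup y) (by linarith)
end
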